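/- Every Bruhat interval [u,v] in a Coxeter group is an Eulerian poset: μ(x,y) = (−1)^{l(y)−l(x)} for all x ≤ y in [u,v]. -/

import Mathlib

/-- Bruhat order on a Coxeter group, defined via the subword property:
`u ≤ v` iff some reduced word for `v` contains a reduced word for `u` as a subword. -/
def bruhatLE {B W : Type*} [Group W] {M : CoxeterMatrix B}
    (cs : CoxeterSystem M W) (u v : W) : Prop :=
  ∃ lv lu : List B, cs.IsReduced lv ∧ cs.wordProd lv = v ∧
    cs.IsReduced lu ∧ cs.wordProd lu = u ∧ lu.Sublist lv

/-- Strict Bruhat order. -/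
def bruhatLT {B W : Type*} [Group W] {M : CoxeterMatrix B}
    (cs : CoxeterSystem M W) (u v : W) : Prop :=
  bruhatLE cs u v ∧ u ≠ v

open scoped Classical

open List

namespace BruhatAux

attribute [local instance] Classical.propDecidable

variable {B W : Type*} [Group W] {M : CoxeterMatrix B} (cs : CoxeterSystem M W)

local prefix:100 "ℙ" => cs.wordProd
local prefix:100 "𝕤" => cs.simple
local prefix:100 "ℓ" => cs.length

private lemma zmod2_add_self : ∀ a : ZMod 2, a + a = 0 := by decide
private lemma zmod2_cases : ∀ a : ZMod 2, a = 0 ∨ a = 1 := by decide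
private lemma zmod2_add_eq_zero : ∀ a b : ZMod 2, a + b = 0 → a = b := by decide

private lemma conj_eq_iff (x y z : W) : x * y * x⁻¹ = z ↔ y = x⁻¹ * z * x := by
  constructor
  · intro h; rw [← h]; group
  · intro h; rw [h]; group

private lemma aux1 (c t : W) (k : ℕ) :
    c ^ k * (c * t * c⁻¹) * (c ^ k)⁻¹ = c ^ (k+1) * t * (c ^ (k+1))⁻¹ := by group

private lemma aux2 {b c : W} (hbc : b * c = c⁻¹ * b) (l : ℕ) :
    c⁻¹ * ((c⁻¹) ^ l * b) * c = (c⁻¹) ^ (l + 2) * b := by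
  calc c⁻¹ * ((c⁻¹) ^ l * b) * c = c⁻¹ * (c⁻¹) ^ l * (b * c) := by group
    _ = c⁻¹ * (c⁻¹) ^ l * (c⁻¹ * b) := by rw [hbc]
    _ = (c⁻¹) ^ (l + 2) * b := by rw [pow_add, pow_two]; group

private lemma aux3 {x y : W} (hx : x * x = 1) (hy : y * y = 1) (t : W) :
    y * t * y = x ↔ t = y * x * y := by
  have hcancel : ∀ z : W, y * (y * z * y) * y = z := by
    intro z
    calc y * (y * z * y) * y = (y * y) * z * (y * y) := by group
      _ = z := by rw [hy, one_mul, mul_one]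
  constructor
  · intro h
    have h3 := congrArg (fun z => y * z * y) h
    rw [hcancel] at h3
    exact h3
  · rintro rfl
    exact hcancel x

/-- The underlying function of the permutation attached to a simple reflection. -/
noncomputable def sigmaFun (i : B) : W × ZMod 2 → W × ZMod 2 :=
  fun p => (𝕤 i * p.1 * 𝕤 i, p.2 + if p.1 = 𝕤 i then 1 else 0)

lemma sigmaFun_invol (i : B) : Function.Involutive (sigmaFun cs i) := by
  rintro ⟨t, e⟩
  unfold sigmaFun
  simp only
  have h1 : 𝕤 i * (𝕤 i * t * 𝕤 i) * 𝕤 i = t := by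
    calc 𝕤 i * (𝕤 i * t * 𝕤 i) * 𝕤 i = (𝕤 i * 𝕤 i) * t * (𝕤 i * 𝕤 i) := by group
      _ = t := by rw [cs.simple_mul_simple_self, one_mul, mul_one]
  have h2 : (𝕤 i * t * 𝕤 i = 𝕤 i) ↔ (t = 𝕤 i) := by
    rw [aux3 (cs.simple_mul_simple_self i) (cs.simple_mul_simple_self i) t]
    constructor
    · intro h; rw [h]
      rw [cs.simple_mul_simple_self, one_mul]
    · intro h; rw [h]
      rw [cs.simple_mul_simple_self, one_mul]
  refine Prod.ext h1 ?_
  simp only [h2]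
  rcases em (t = 𝕤 i) with h | h <;> simp [h, add_assoc, zmod2_add_self]

/-- The permutation attached to a simple reflection. -/
noncomputable def sigmaPerm (i : B) : Equiv.Perm (W × ZMod 2) := (sigmaFun_invol cs i).toPerm

lemma sigmaPerm_apply (i : B) (p : W × ZMod 2) :
    sigmaPerm cs i p = (𝕤 i * p.1 * 𝕤 i, p.2 + if p.1 = 𝕤 i then 1 else 0) := rfl

lemma sigma_pow_apply (i j : B) (k : ℕ) (t : W) (e : ZMod 2) :
    ((sigmaPerm cs i * sigmaPerm cs j) ^ k) (t, e) =
      ((𝕤 i * 𝕤 j) ^ k * t * ((𝕤 i * 𝕤 j) ^ k)⁻¹,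
        e + ∑ l ∈ Finset.range (2 * k),
          (if t = (𝕤 j * 𝕤 i) ^ l * 𝕤 j then 1 else 0)) := by
  have hinv : (𝕤 i * 𝕤 j)⁻¹ = 𝕤 j * 𝕤 i := by
    rw [mul_inv_rev, cs.inv_simple, cs.inv_simple]
  have hbp : 𝕤 j * (𝕤 i * 𝕤 j) = (𝕤 i * 𝕤 j)⁻¹ * 𝕤 j := by
    rw [hinv, ← mul_assoc]
  induction k generalizing t e with
  | zero => simp
  | succ k ih =>
    rw [pow_succ, Equiv.Perm.mul_apply]
    have hstep : (sigmaPerm cs i * sigmaPerm cs j) (t, e) =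
        ((𝕤 i * 𝕤 j) * t * (𝕤 i * 𝕤 j)⁻¹,
          e + ((if t = 𝕤 j then 1 else 0)
            + (if t = 𝕤 j * 𝕤 i * 𝕤 j then 1 else 0))) := by
      rw [Equiv.Perm.mul_apply, sigmaPerm_apply, sigmaPerm_apply]
      refine Prod.ext ?_ ?_
      · simp only [hinv]
        group
      · simp only
        rw [aux3 (cs.simple_mul_simple_self i) (cs.simple_mul_simple_self j) t, add_assoc]
    rw [hstep, ih]
    refine Prod.ext ?_ ?_
    · exact aux1 (𝕤 i * 𝕤 j) t k
    · simp only
      have key : ∀ l : ℕ,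
          ((𝕤 i * 𝕤 j) * t * (𝕤 i * 𝕤 j)⁻¹ = (𝕤 j * 𝕤 i) ^ l * 𝕤 j) ↔
            (t = (𝕤 j * 𝕤 i) ^ (l + 2) * 𝕤 j) := by
        intro l
        rw [conj_eq_iff, ← hinv, aux2 hbp l]
      have hsum : ∑ l ∈ Finset.range (2 * k),
            (if (𝕤 i * 𝕤 j) * t * (𝕤 i * 𝕤 j)⁻¹ = (𝕤 j * 𝕤 i) ^ l * 𝕤 j then (1 : ZMod 2) else 0)
          = ∑ l ∈ Finset.range (2 * k),
            (if t = (𝕤 j * 𝕤 i) ^ (l + 2) * 𝕤 j then (1 : ZMod 2) else 0) := by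
        refine Finset.sum_congr rfl fun l _ => ?_
        rw [key l]
      rw [hsum]
      have hr : (2 * (k + 1)) = (2 * k + 1) + 1 := by ring
      rw [hr, Finset.sum_range_succ', Finset.sum_range_succ']
      have e0 : ((𝕤 j * 𝕤 i) ^ (0:ℕ) * 𝕤 j : W) = 𝕤 j := by rw [pow_zero, one_mul]
      have e1 : ((𝕤 j * 𝕤 i) ^ (0+1:ℕ) * 𝕤 j : W) = 𝕤 j * 𝕤 i * 𝕤 j := by rw [pow_one]
      have e2 : ∀ l : ℕ, l + 1 + 1 = l + 2 := fun l => by omega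
      simp only [e2, e0, e1]
      ring

lemma sigma_liftable : M.IsLiftable (sigmaPerm cs) := by
  intro i j
  apply Equiv.ext
  rintro ⟨t, e⟩
  rw [sigma_pow_apply]
  have h1 : (𝕤 i * 𝕤 j) ^ M i j = 1 := cs.simple_mul_simple_pow i j
  have h2 : ((𝕤 j * 𝕤 i) ^ M i j : W) = 1 := by
    rw [M.symmetric i j]; exact cs.simple_mul_simple_pow j i
  rw [h1]
  have hsum : ∑ l ∈ Finset.range (2 * M i j),
      (if t = (𝕤 j * 𝕤 i) ^ l * 𝕤 j then (1:ZMod 2) else 0) = 0 := by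
    rw [two_mul, Finset.sum_range_add]
    have : ∀ l, ((𝕤 j * 𝕤 i) ^ (M i j + l) * 𝕤 j : W) = (𝕤 j * 𝕤 i) ^ l * 𝕤 j := by
      intro l
      rw [pow_add, h2, one_mul]
    simp only [this]
    exact zmod2_add_self _
  rw [hsum]
  simp

/-- The sign homomorphism into permutations of `W × ZMod 2`. -/
noncomputable def phi : W →* Equiv.Perm (W × ZMod 2) :=
  cs.lift ⟨sigmaPerm cs, sigma_liftable cs⟩

lemma phi_simple (i : B) : phi cs (𝕤 i) = sigmaPerm cs i :=
  cs.lift_apply_simple (sigma_liftable cs) i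

lemma phi_wordProd (ω : List B) (t : W) (e : ZMod 2) :
    phi cs (ℙ ω) (t, e) =
      (ℙ ω * t * (ℙ ω)⁻¹, e + ((cs.rightInvSeq ω).count t : ZMod 2)) := by
  induction ω generalizing t e with
  | nil => simp [CoxeterSystem.wordProd_nil]
  | cons i ω ih =>
    rw [cs.wordProd_cons, map_mul, Equiv.Perm.mul_apply, ih, phi_simple, sigmaPerm_apply]
    have hris : cs.rightInvSeq (i :: ω) = ((ℙ ω)⁻¹ * 𝕤 i * ℙ ω) :: cs.rightInvSeq ω := rfl
    refine Prod.ext ?_ ?_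
    · simp only
      rw [mul_inv_rev, cs.inv_simple]
      group
    · simp only [hris, List.count_cons]
      have hcond : (ℙ ω * t * (ℙ ω)⁻¹ = 𝕤 i) ↔ (t = (ℙ ω)⁻¹ * 𝕤 i * ℙ ω) := by
        rw [conj_eq_iff, mul_assoc]
      push_cast
      rw [hcond]
      rcases em (t = (ℙ ω)⁻¹ * 𝕤 i * ℙ ω) with h | h
      · simp [h, add_assoc, add_comm]
      · have h' : ¬((ℙ ω)⁻¹ * 𝕤 i * ℙ ω = t) := fun hh => h hh.symm
        simp [h, h', add_assoc, add_comm]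

/-- Parity of the number of occurrences of `t` in the (right) inversion sequence of any word
for `w`. -/
noncomputable def nu (w t : W) : ZMod 2 := (phi cs w (t, 0)).2

lemma nu_eq_count {ω : List B} {w : W} (hw : ℙ ω = w) (t : W) :
    nu cs w t = ((cs.rightInvSeq ω).count t : ZMod 2) := by
  unfold nu
  rw [← hw, phi_wordProd, zero_add]

lemma phi_apply_eq (w t : W) (e : ZMod 2) :
    phi cs w (t, e) = (w * t * w⁻¹, e + nu cs w t) := by
  obtain ⟨ω, hω⟩ := cs.wordProd_surjective w
  rw [nu_eq_count cs hω, ← hω, phi_wordProd]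

lemma nu_mul (a b t : W) : nu cs (a * b) t = nu cs b t + nu cs a (b * t * b⁻¹) := by
  have h : phi cs (a * b) (t, 0) = phi cs a (phi cs b (t, 0)) := by
    rw [map_mul, Equiv.Perm.mul_apply]
  have h2 : phi cs b (t, 0) = (b * t * b⁻¹, nu cs b t) := by
    rw [phi_apply_eq, zero_add]
  unfold nu
  rw [h, h2, phi_apply_eq]
  rfl

lemma nu_one (t : W) : nu cs 1 t = 0 := by
  unfold nu
  rw [map_one]
  rfl

lemma nu_inv (w t : W) : nu cs w⁻¹ t = nu cs w (w⁻¹ * t * w) := by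
  have h := nu_mul cs w w⁻¹ t
  rw [mul_inv_cancel, nu_one] at h
  have h2 : w⁻¹ * t * w⁻¹⁻¹ = w⁻¹ * t * w := by rw [inv_inv]
  rw [h2] at h
  exact zmod2_add_eq_zero _ _ h.symm

lemma nu_reflection_self {t : W} (ht : cs.IsReflection t) : nu cs t t = 1 := by
  obtain ⟨w, i, rfl⟩ := ht
  have key : w * 𝕤 i * w⁻¹ = w * (𝕤 i * w⁻¹) := by group
  nth_rewrite 1 [key]
  rw [nu_mul]
  have c1 : 𝕤 i * w⁻¹ * (w * 𝕤 i * w⁻¹) * (𝕤 i * w⁻¹)⁻¹ = 𝕤 i := by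
    rw [mul_inv_rev, inv_inv, cs.inv_simple]
    calc 𝕤 i * w⁻¹ * (w * 𝕤 i * w⁻¹) * (w * 𝕤 i)
        = 𝕤 i * (w⁻¹ * w) * 𝕤 i * (w⁻¹ * w) * 𝕤 i := by group
      _ = (𝕤 i * 𝕤 i) * 𝕤 i := by
          rw [inv_mul_cancel, mul_one, mul_one]
      _ = 𝕤 i := by rw [cs.simple_mul_simple_self, one_mul]
  rw [c1]
  have c2 : nu cs (𝕤 i * w⁻¹) (w * 𝕤 i * w⁻¹) =
      nu cs w⁻¹ (w * 𝕤 i * w⁻¹) + 1 := by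
    rw [nu_mul]
    have c3 : w⁻¹ * (w * 𝕤 i * w⁻¹) * w⁻¹⁻¹ = 𝕤 i := by group
    rw [c3]
    have c4 : nu cs (𝕤 i) (𝕤 i) = 1 := by
      unfold nu
      rw [phi_simple, sigmaPerm_apply]
      simp
    rw [c4, add_comm]
  rw [c2]
  have c5 : nu cs w⁻¹ (w * 𝕤 i * w⁻¹) = nu cs w (𝕤 i) := by
    rw [nu_inv]
    congr 1
    group
  rw [c5]
  rw [add_comm (nu cs w (𝕤 i)) 1, add_assoc]
  rw [zmod2_add_self, add_zero]

lemma nu_mem_rightInvSeq {ω : List B} {w t : W} (hw : ℙ ω = w)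
    (h : nu cs w t = 1) : t ∈ cs.rightInvSeq ω := by
  have hc := nu_eq_count cs hw t
  rw [h] at hc
  by_contra hmem
  rw [List.count_eq_zero_of_not_mem hmem] at hc
  simp at hc

lemma nu_eq_one_of_isRightInversion {w t : W} (ht : cs.IsReflection t)
    (hlt : ℓ (w * t) < ℓ w) : nu cs w t = 1 := by
  rcases zmod2_cases (nu cs w t) with h0 | h1
  · exfalso
    have h2 : nu cs (w * t) t = 1 := by
      rw [nu_mul]
      have : t * t * t⁻¹ = t := by
        rw [ht.inv]
        rw [ht.mul_self, one_mul]
      rw [this, h0, add_zero, nu_reflection_self cs ht]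
    obtain ⟨ω, hred, hω⟩ := cs.exists_reduced_word' (w * t)
    have hmem := nu_mem_rightInvSeq cs hω.symm h2
    have hinv := cs.isRightInversion_of_mem_rightInvSeq hred hmem
    rw [hω.symm] at hinv  -- ?
    have := hinv.2
    rw [mul_assoc, ht.mul_self, mul_one] at this
    omega
  · exact h1

/-- **Strong exchange property.** -/
theorem strongExchange {w t : W} (ht : cs.IsReflection t) (hlt : ℓ (w * t) < ℓ w)
    {ω : List B} (hred : cs.IsReduced ω) (hω : ℙ ω = w) :
    ∃ j < ω.length, ℙ (ω.eraseIdx j) = w * t := by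
  have h1 := nu_eq_one_of_isRightInversion cs ht hlt
  have hmem := nu_mem_rightInvSeq cs hω h1
  obtain ⟨j, hj, hget⟩ := List.mem_iff_getElem.mp hmem
  rw [cs.length_rightInvSeq] at hj
  refine ⟨j, hj, ?_⟩
  have := cs.wordProd_mul_getD_rightInvSeq ω j
  rw [← List.getD_eq_getElem _ 1 (by rw [cs.length_rightInvSeq]; exact hj)] at hget
  rw [hget, hω] at this
  exact this.symm

/-! ### Deletion and reduction -/

lemma deletion {ω : List B} (h : ¬ cs.IsReduced ω) :
    ∃ σ, σ <+ ω ∧ σ.length + 2 = ω.length ∧ ℙ σ = ℙ ω := by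
  induction ω using List.reverseRecOn with
  | nil =>
    exact absurd (by simp [CoxeterSystem.IsReduced]) h
  | append_singleton τ i ih =>
    rcases em (cs.IsReduced τ) with hred | hnred
    · have hπ : ℙ (τ ++ [i]) = ℙ τ * 𝕤 i := by
        rw [cs.wordProd_append, cs.wordProd_singleton]
      have hlen : ℓ (ℙ τ * 𝕤 i) + 1 = ℓ (ℙ τ) := by
        rcases cs.length_mul_simple (ℙ τ) i with h1 | h2
        · exfalso
          apply h
          unfold CoxeterSystem.IsReduced at hred ⊢
          rw [hπ, h1, hred, List.length_append, List.length_singleton]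
        · exact h2
      have hlt : ℓ (ℙ τ * 𝕤 i) < ℓ (ℙ τ) := by omega
      obtain ⟨j, hj, hje⟩ := strongExchange cs (cs.isReflection_simple i) hlt hred rfl
      refine ⟨τ.eraseIdx j, ?_, ?_, ?_⟩
      · exact (List.eraseIdx_sublist τ j).trans (List.sublist_append_left τ [i])
      · have := List.length_eraseIdx_add_one hj
        rw [List.length_append, List.length_singleton]
        omega
      · rw [hje, hπ]
    · obtain ⟨σ, h1, h2, h3⟩ := ih hnred
      refine ⟨σ ++ [i], h1.append_right [i], ?_, ?_⟩
      · rw [List.length_append, List.length_append, List.length_singleton]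
        omega
      · rw [cs.wordProd_append, cs.wordProd_append, h3]

lemma reduceToSublist (ω : List B) : ∃ σ, σ <+ ω ∧ cs.IsReduced σ ∧ ℙ σ = ℙ ω := by
  generalize hn : ω.length = n
  induction n using Nat.strong_induction_on generalizing ω with
  | _ n ih =>
    rcases em (cs.IsReduced ω) with hred | hnred
    · exact ⟨ω, List.Sublist.refl ω, hred, rfl⟩
    · obtain ⟨σ, hsub, hlen, hπ⟩ := deletion cs hnred
      obtain ⟨σ', h1, h2, h3⟩ := ih σ.length (by omega) σ rfl
      exact ⟨σ', h1.trans hsub, h2, by rw [h3, hπ]⟩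

/-! ### The chain order -/

/-- One step of the Bruhat chain order: multiply by a reflection, increasing length. -/
def cstep (u v : W) : Prop := (∃ t, cs.IsReflection t ∧ v = u * t) ∧ ℓ u < ℓ v

/-- The chain form of the Bruhat order. -/
def cle : W → W → Prop := Relation.ReflTransGen (cstep cs)

lemma cle_refl (w : W) : cle cs w w := Relation.ReflTransGen.refl

lemma cle_trans {u v w : W} (h1 : cle cs u v) (h2 : cle cs v w) : cle cs u w :=
  Relation.ReflTransGen.trans h1 h2

lemma cle_length {u v : W} (h : cle cs u v) : ℓ u ≤ ℓ v := by
  induction h with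
  | refl => exact le_rfl
  | tail _ hstep ih => exact ih.trans (le_of_lt hstep.2)

lemma cle_eq_of_length_ge {u v : W} (h : cle cs u v) (hl : ℓ v ≤ ℓ u) : u = v := by
  rcases Relation.ReflTransGen.cases_tail h with h1 | ⟨b, hub, hbv⟩
  · exact h1.symm
  · exfalso
    have := cle_length cs hub
    have := hbv.2
    omega

lemma simple_mul_cle {z : W} (i : B) (h : ℓ z < ℓ (𝕤 i * z)) : cle cs z (𝕤 i * z) := by
  refine Relation.ReflTransGen.single ⟨⟨z⁻¹ * 𝕤 i * z, ⟨z⁻¹, i, by rw [inv_inv]⟩, by group⟩, h⟩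

lemma cle_of_simple_mul {z : W} (i : B) (h : ℓ (𝕤 i * z) < ℓ z) : cle cs (𝕤 i * z) z := by
  have h2 : 𝕤 i * (𝕤 i * z) = z := cs.simple_mul_simple_cancel_left i
  have := simple_mul_cle cs i (z := 𝕤 i * z) (by rw [h2]; exact h)
  rwa [h2] at this

lemma subword_of_cle {y z : W} (h : cle cs z y) {ω : List B} (hred : cs.IsReduced ω)
    (hω : ℙ ω = y) : ∃ σ, σ <+ ω ∧ cs.IsReduced σ ∧ ℙ σ = z := by
  generalize hn : ℓ y = n at *
  induction n using Nat.strong_induction_on generalizing y z ω with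
  | _ n ih =>
    rcases Relation.ReflTransGen.cases_tail h with h1 | ⟨w, hzw, hwy⟩
    · exact ⟨ω, List.Sublist.refl ω, hred, by rw [hω, h1]⟩
    · obtain ⟨⟨t, ht, hy⟩, hlen⟩ := hwy
      have hyt : y * t = w := by rw [hy, mul_assoc, ht.mul_self, mul_one]
      have hlt : ℓ (y * t) < ℓ y := by rw [hyt]; omega
      obtain ⟨j, hj, hje⟩ := strongExchange cs ht (by rw [hn] at hlt ⊢; exact hlt) hred hω
      obtain ⟨σ₁, hs1, hr1, hp1⟩ := reduceToSublist cs (ω.eraseIdx j)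
      have hπ1 : ℙ σ₁ = w := by rw [hp1, hje, hyt]
      obtain ⟨σ, hs, hr, hp⟩ := ih (ℓ w) (by omega) hzw hr1 hπ1 rfl
      exact ⟨σ, hs.trans (hs1.trans (List.eraseIdx_sublist ω j)), hr, hp⟩

/-- The lifting-property statement, level `n`. -/
def Z1Prop (n : ℕ) : Prop := ∀ v : W, ℓ v ≤ n → ∀ i : B, ℓ (𝕤 i * v) < ℓ v → ∀ u, cle cs u v →
  cle cs (𝕤 i * u) v ∧ (ℓ (𝕤 i * u) < ℓ u → cle cs (𝕤 i * u) (𝕤 i * v)) ∧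
    (ℓ u < ℓ (𝕤 i * u) → cle cs u (𝕤 i * v))

/-- The subword-implies-chain statement, level `n`. -/
def CProp (n : ℕ) : Prop := ∀ lv : List B, cs.IsReduced lv → lv.length ≤ n →
  ∀ lu : List B, lu <+ lv → cle cs (ℙ lu) (ℙ lv)

theorem bothProp (n : ℕ) : Z1Prop cs n ∧ CProp cs n := by
  induction n using Nat.strong_induction_on with
  | _ n ihg =>
  have hZ : Z1Prop cs n := by
    intro v hvn i hdesc u hu
    induction hu using Relation.ReflTransGen.head_induction_on with
    | refl =>
      refine ⟨cle_of_simple_mul cs i hdesc, fun _ => cle_refl cs _, fun hgt => absurd hdesc (by omega)⟩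
    | head hstep hcv ih2 =>
      rename_i a c
      obtain ⟨⟨t, ht, hc⟩, hlac⟩ := hstep
      have hcn : ℓ c ≤ n := (cle_length cs hcv).trans hvn
      rcases cs.length_simple_mul c i with hcgt | hclt
      · -- ℓ (s i * c) = ℓ c + 1 : ascent at c
        have p1c := ih2.1
        have p3c := ih2.2.2 (by omega)
        rcases cs.length_simple_mul a i with hagt | halt
        · -- ascent at a
          have hstep2 : cstep cs (𝕤 i * a) (𝕤 i * c) :=
            ⟨⟨t, ht, by rw [hc, mul_assoc]⟩, by omega⟩
          refine ⟨cle_trans cs (Relation.ReflTransGen.single hstep2) p1c, ?_, ?_⟩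
          · intro hlt; omega
          · intro _
            exact cle_trans cs (Relation.ReflTransGen.single ⟨⟨t, ht, hc⟩, hlac⟩) p3c
        · -- descent at a
          have h1 : cle cs (𝕤 i * a) a := cle_of_simple_mul cs i (by omega)
          have h2 : cle cs a c := Relation.ReflTransGen.single ⟨⟨t, ht, hc⟩, hlac⟩
          refine ⟨cle_trans cs h1 (cle_trans cs h2 hcv), ?_, ?_⟩
          · intro _
            exact cle_trans cs h1 (cle_trans cs h2 p3c)
          · intro hgt; omega
      · -- ℓ (s i * c) + 1 = ℓ c : descent at c
        have p1c := ih2.1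
        have p2c := ih2.2.1 (by omega)
        rcases cs.length_simple_mul a i with hagt | halt
        · -- ascent at a : the hard case, uses strong exchange
          have key : cle cs (𝕤 i * a) v ∧ cle cs a (𝕤 i * c) := by
            obtain ⟨α, hαred, hα⟩ := cs.exists_reduced_word' (𝕤 i * c)
            have hαlen : α.length = ℓ (𝕤 i * c) := by
              unfold CoxeterSystem.IsReduced at hαred
              rw [← hα] at hαred
              omega
            have hωred : cs.IsReduced (i :: α) := by
              unfold CoxeterSystem.IsReduced
              rw [cs.wordProd_cons, ← hα, cs.simple_mul_simple_cancel_left,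
                List.length_cons]
              omega
            have hωπ : ℙ (i :: α) = c := by
              rw [cs.wordProd_cons, ← hα, cs.simple_mul_simple_cancel_left]
            have hat : c * t = a := by rw [hc, mul_assoc, ht.mul_self, mul_one]
            have hclt2 : ℓ (c * t) < ℓ c := by rw [hat]; omega
            obtain ⟨j, hj, hje⟩ := strongExchange cs ht hclt2 hωred hωπ
            rw [hat] at hje
            match j, hje with
            | 0, hje =>
              -- a = π α = s i * c
              have ha : a = 𝕤 i * c := by rw [← hje, List.eraseIdx_cons_zero, ← hα]
              constructor
              · rw [ha, cs.simple_mul_simple_cancel_left]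
                exact hcv
              · rw [ha]; exact cle_refl cs _
            | (k+1), hje =>
              have hje2 : ℙ (i :: α.eraseIdx k) = a := by
                rw [← hje, List.eraseIdx_cons_succ]
              have hsa : 𝕤 i * a = ℙ (α.eraseIdx k) := by
                rw [← hje2, cs.wordProd_cons, cs.simple_mul_simple_cancel_left]
              have hαn : α.length ≤ n - 1 := by omega
              have hcle1 : cle cs (ℙ (α.eraseIdx k)) (ℙ α) := by
                have hn1 : n - 1 < n := by omega
                exact (ihg (n-1) hn1).2 α hαred hαn _ (List.eraseIdx_sublist α k)
              have hcle2 : cle cs (𝕤 i * a) (𝕤 i * c) := by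
                rw [hsa, hα]; exact hcle1
              exact ⟨cle_trans cs hcle2 p1c,
                cle_trans cs (simple_mul_cle cs (z := a) i (by omega)) hcle2⟩
          refine ⟨key.1, ?_, fun _ => cle_trans cs key.2 p2c⟩
          · intro hlt; omega
        · -- descent at a
          have hstep2 : cstep cs (𝕤 i * a) (𝕤 i * c) :=
            ⟨⟨t, ht, by rw [hc, mul_assoc]⟩, by omega⟩
          refine ⟨cle_trans cs (Relation.ReflTransGen.single hstep2) p1c, ?_, ?_⟩
          · intro _
            exact cle_trans cs (Relation.ReflTransGen.single hstep2) p2c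
          · intro hgt; omega
  have hC : CProp cs n := by
    intro lv hred hn lu hsub
    match lv, hsub with
    | [], hsub =>
      rw [List.sublist_nil] at hsub
      rw [hsub]
      exact cle_refl cs _
    | (i :: α), hsub =>
      have hαred : cs.IsReduced α := by
        have := hred.drop 1
        simpa using this
      have hαn : α.length ≤ n - 1 := by
        have := (List.length_cons (a := i) (as := α)) ▸ hn
        omega
      have hn1 : n - 1 < n := by
        have : 1 ≤ lv.length → True := fun _ => trivial
        have hlen : (i :: α).length ≤ n := hn
        rw [List.length_cons] at hlen
        omega
      have hlv : ℓ (ℙ (i :: α)) = α.length + 1 := by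
        unfold CoxeterSystem.IsReduced at hred
        rw [hred, List.length_cons]
      have hlα : ℓ (ℙ α) = α.length := hαred
      have hdesc : ℓ (𝕤 i * ℙ (i :: α)) < ℓ (ℙ (i :: α)) := by
        rw [cs.wordProd_cons, cs.simple_mul_simple_cancel_left, hlα, ← cs.wordProd_cons, hlv]
        omega
      cases hsub with
      | cons _ h =>
        have h1 : cle cs (ℙ lu) (ℙ α) := (ihg (n-1) hn1).2 α hαred hαn lu h
        have h2 : cle cs (ℙ α) (ℙ (i :: α)) := by
          rw [cs.wordProd_cons]
          exact simple_mul_cle cs i (by rw [hlα, show 𝕤 i * ℙ α = ℙ (i :: α) from (cs.wordProd_cons i α).symm, hlv]; omega)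
        exact cle_trans cs h1 h2
      | cons_cons _ h =>
        rename_i lu'
        have h1 : cle cs (ℙ lu') (ℙ α) := (ihg (n-1) hn1).2 α hαred hαn lu' h
        have hvn : ℓ (ℙ (i :: α)) ≤ n := by rw [hlv]; omega
        have h2 : cle cs (ℙ lu') (ℙ (i :: α)) := by
          refine cle_trans cs h1 ?_
          rw [cs.wordProd_cons]
          exact simple_mul_cle cs i (by rw [hlα, show 𝕤 i * ℙ α = ℙ (i :: α) from (cs.wordProd_cons i α).symm, hlv]; omega)
        have hZ1 := hZ (ℙ (i :: α)) hvn i hdesc (ℙ lu') h2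
        rw [cs.wordProd_cons]
        exact hZ1.1
  exact ⟨hZ, hC⟩

/-- The lifting property for the chain order. -/
lemma cle_lift {v : W} {i : B} (hdesc : ℓ (𝕤 i * v) < ℓ v) {u : W} (h : cle cs u v) :
    cle cs (𝕤 i * u) v ∧ (ℓ (𝕤 i * u) < ℓ u → cle cs (𝕤 i * u) (𝕤 i * v)) ∧
      (ℓ u < ℓ (𝕤 i * u) → cle cs u (𝕤 i * v)) :=
  (bothProp cs (ℓ v)).1 v le_rfl i hdesc u h

lemma cle_of_sublist {lv lu : List B} (hred : cs.IsReduced lv) (hsub : lu <+ lv) :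
    cle cs (ℙ lu) (ℙ lv) :=
  (bothProp cs lv.length).2 lv hred le_rfl lu hsub

/-! ### Finiteness of Bruhat intervals -/

lemma cle_lower_finite (y : W) : {z : W | cle cs z y}.Finite := by
  obtain ⟨ω, hred, hω⟩ := cs.exists_reduced_word' y
  apply Set.Finite.subset (List.finite_toSet ((ω.sublists).map cs.wordProd))
  intro z hz
  obtain ⟨σ, hsub, _, hπ⟩ := subword_of_cle cs hz hred hω.symm
  exact List.mem_map.mpr ⟨σ, List.mem_sublists.mpr hsub, hπ⟩

/-- The Bruhat interval `[x, y]` as a finset. -/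
noncomputable def intv (x y : W) : Finset W :=
  ((cle_lower_finite cs y).subset (fun _ hz => hz.2) :
    Set.Finite {z : W | cle cs x z ∧ cle cs z y}).toFinset

lemma mem_intv {x y z : W} : z ∈ intv cs x y ↔ cle cs x z ∧ cle cs z y :=
  Set.Finite.mem_toFinset _

private lemma neg_pow_succ_eq {p q : ℕ} (h : p = q + 1) : ((-1:ℤ)^p) = -((-1:ℤ)^q) := by
  subst h; rw [pow_succ]; ring

private lemma length_simple_mul_ne (w : W) (i : B) : ℓ (𝕤 i * w) ≠ ℓ w := by
  rcases cs.length_simple_mul w i with h | h <;> omega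

/-- **Verma's theorem**: alternating length-sum over a nontrivial Bruhat interval vanishes. -/
theorem sum_neg_one_pow {y : W} {n : ℕ} (hn : ℓ y = n) :
    ∀ x, cle cs x y → x ≠ y → ∑ z ∈ intv cs x y, ((-1:ℤ)^(ℓ z)) = 0 := by
  induction n using Nat.strong_induction_on generalizing y with
  | _ n ih =>
  intro x hxy hne
  have hy1 : y ≠ 1 := by
    rintro rfl
    exact hne (cle_eq_of_length_ge cs hxy (by simp))
  obtain ⟨i, hi⟩ := cs.exists_leftDescent_of_ne_one hy1
  have hdesc : ℓ (𝕤 i * y) < ℓ y := hi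
  -- the paired part of the interval
  have hP : ∑ z ∈ (intv cs x y).filter (fun z => cle cs x (𝕤 i * z)), ((-1:ℤ)^(ℓ z)) = 0 := by
    refine Finset.sum_involution (fun a _ => 𝕤 i * a) ?_ ?_ ?_ ?_
    · intro a _
      rcases cs.length_simple_mul a i with h | h
      · rw [neg_pow_succ_eq h]; ring
      · rw [neg_pow_succ_eq (p := ℓ a) (q := ℓ (𝕤 i * a)) (by omega)]; ring
    · intro a _ _
      intro hcontra
      have h2 : cs.simple i * a = a := hcontra
      exact length_simple_mul_ne cs a i (by rw [h2])
    · intro a ha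
      rw [Finset.mem_filter, mem_intv] at ha
      obtain ⟨⟨hxa, hay⟩, hxsa⟩ := ha
      rw [Finset.mem_filter, mem_intv]
      refine ⟨⟨hxsa, ((cle_lift cs hdesc hay).1 : _)⟩, ?_⟩
      rw [cs.simple_mul_simple_cancel_left]
      exact hxa
    · intro a _
      exact cs.simple_mul_simple_cancel_left i
  have hsplit := Finset.sum_filter_add_sum_filter_not (intv cs x y)
    (fun z => cle cs x (𝕤 i * z)) (fun z => ((-1:ℤ)^(ℓ z)))
  rcases cs.length_simple_mul x i with hxasc | hxdesc
  · -- ascent at x: the unpaired part is empty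
    have hU : (intv cs x y).filter (fun z => ¬ cle cs x (𝕤 i * z)) = ∅ := by
      rw [Finset.filter_eq_empty_iff]
      intro z hz
      rw [mem_intv] at hz
      obtain ⟨hxz, hzy⟩ := hz
      simp only [not_not]
      rcases cs.length_simple_mul z i with h | h
      · exact cle_trans cs hxz (simple_mul_cle cs i (by omega))
      · exact (cle_lift cs (v := z) (i := i) (by omega) hxz).2.2 (by omega)
    rw [hU, Finset.sum_empty] at hsplit
    rw [← hsplit, hP]
    ring
  · -- descent at x
    set V : Finset W := (intv cs (𝕤 i * x) (𝕤 i * y)).filter (fun w => ¬ cle cs x w) with hV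
    have hVasc : ∀ w ∈ V, ℓ w < ℓ (𝕤 i * w) := by
      intro w hw
      rw [hV, Finset.mem_filter, mem_intv] at hw
      obtain ⟨⟨hsxw, hwsy⟩, hnxw⟩ := hw
      by_contra hcon
      rcases cs.length_simple_mul w i with h | h
      · omega
      · -- descent at w: deduce cle x w, contradiction
        have := (cle_lift cs (v := w) (i := i) (by omega) hsxw).1
        rw [cs.simple_mul_simple_cancel_left] at this
        exact hnxw this
    have hU2 : ∑ z ∈ (intv cs x y).filter (fun z => ¬ cle cs x (𝕤 i * z)), ((-1:ℤ)^(ℓ z))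
        = ∑ w ∈ V, (-((-1:ℤ)^(ℓ w))) := by
      refine Finset.sum_bij' (fun z _ => 𝕤 i * z) (fun w _ => 𝕤 i * w) ?_ ?_ ?_ ?_ ?_
      · -- maps U into V
        intro z hz
        rw [Finset.mem_filter, mem_intv] at hz
        obtain ⟨⟨hxz, hzy⟩, hnxsz⟩ := hz
        have hdz : ℓ (𝕤 i * z) < ℓ z := by
          by_contra hcon
          rcases cs.length_simple_mul z i with h | h
          · exact hnxsz (cle_trans cs hxz (simple_mul_cle cs i (by omega)))
          · omega
        rw [hV, Finset.mem_filter, mem_intv]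
        exact ⟨⟨(cle_lift cs (v := z) (i := i) hdz hxz).2.1 (by omega),
          (cle_lift cs hdesc hzy).2.1 hdz⟩, hnxsz⟩
      · -- maps V into U
        intro w hw
        have hwa := hVasc w hw
        rw [hV, Finset.mem_filter, mem_intv] at hw
        obtain ⟨⟨hsxw, hwsy⟩, hnxw⟩ := hw
        have hxsw : cle cs x (𝕤 i * w) := by
          have hchain : cle cs (𝕤 i * x) (𝕤 i * w) :=
            cle_trans cs hsxw (simple_mul_cle cs i hwa)
          have hd2 : ℓ (𝕤 i * (𝕤 i * w)) < ℓ (𝕤 i * w) := by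
            rw [cs.simple_mul_simple_cancel_left]; exact hwa
          have := (cle_lift cs (v := 𝕤 i * w) (i := i) hd2 hchain).1
          rwa [cs.simple_mul_simple_cancel_left] at this
        have hswy : cle cs (𝕤 i * w) y := by
          have hwy : cle cs w y := cle_trans cs hwsy (cle_of_simple_mul cs i hdesc)
          exact (cle_lift cs hdesc hwy).1
        rw [Finset.mem_filter, mem_intv, cs.simple_mul_simple_cancel_left]
        exact ⟨⟨hxsw, hswy⟩, hnxw⟩
      · intro z _; exact cs.simple_mul_simple_cancel_left i
      · intro w _; exact cs.simple_mul_simple_cancel_left i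
      · -- pointwise values
        intro z hz
        rw [Finset.mem_filter, mem_intv] at hz
        obtain ⟨⟨hxz, hzy⟩, hnxsz⟩ := hz
        have hdz : ℓ (𝕤 i * z) < ℓ z := by
          by_contra hcon
          rcases cs.length_simple_mul z i with h | h
          · exact hnxsz (cle_trans cs hxz (simple_mul_cle cs i (by omega)))
          · omega
        have h2 : ℓ z = ℓ (𝕤 i * z) + 1 := by
          rcases cs.length_simple_mul z i with h | h <;> omega
        rw [neg_pow_succ_eq h2]
    -- split the interval [s x, s y]
    have hI2 : (intv cs x (𝕤 i * y)) = (intv cs (𝕤 i * x) (𝕤 i * y)).filter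
        (fun w => cle cs x w) := by
      ext w
      rw [Finset.mem_filter, mem_intv, mem_intv]
      constructor
      · rintro ⟨h1, h2⟩
        exact ⟨⟨cle_trans cs (cle_of_simple_mul cs (z := x) i (by omega)) h1, h2⟩, h1⟩
      · rintro ⟨⟨_, h2⟩, h3⟩
        exact ⟨h3, h2⟩
    have hsplit2 := Finset.sum_filter_add_sum_filter_not (intv cs (𝕤 i * x) (𝕤 i * y))
      (fun w => cle cs x w) (fun z => ((-1:ℤ)^(ℓ z)))
    have hsxy : cle cs (𝕤 i * x) (𝕤 i * y) := (cle_lift cs hdesc hxy).2.1 (by omega)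
    have hBig : ∑ z ∈ intv cs (𝕤 i * x) (𝕤 i * y), ((-1:ℤ)^(ℓ z)) = 0 := by
      have hne2 : 𝕤 i * x ≠ 𝕤 i * y := fun h => hne (by
        have := congrArg (fun z => 𝕤 i * z) h
        simpa only [cs.simple_mul_simple_cancel_left] using this)
      exact ih (ℓ (𝕤 i * y)) (by omega) rfl (𝕤 i * x) hsxy hne2
    have hSmall : ∑ z ∈ intv cs x (𝕤 i * y), ((-1:ℤ)^(ℓ z)) = 0 := by
      rcases em (cle cs x (𝕤 i * y)) with hc | hc
      · have hne3 : x ≠ 𝕤 i * y := by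
          rintro rfl
          have h1 := cle_length cs hxy
          rw [cs.simple_mul_simple_cancel_left] at hxdesc
          omega
        exact ih (ℓ (𝕤 i * y)) (by omega) rfl x hc hne3
      · have : intv cs x (𝕤 i * y) = ∅ := by
          rw [Finset.eq_empty_iff_forall_notMem]
          intro z hz
          rw [mem_intv] at hz
          exact hc (cle_trans cs hz.1 hz.2)
        rw [this, Finset.sum_empty]
    have hVsum : ∑ w ∈ V, ((-1:ℤ)^(ℓ w)) = 0 := by
      have := hsplit2
      rw [← hI2] at this
      rw [hV]
      rw [hSmall] at this
      omega
    have hUzero : ∑ z ∈ (intv cs x y).filter (fun z => ¬ cle cs x (𝕤 i * z)),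
        ((-1:ℤ)^(ℓ z)) = 0 := by
      rw [hU2, Finset.sum_neg_distrib]
      rw [hVsum]
      ring
    rw [← hsplit, hP, hUzero]
    ring

lemma bruhatLE_iff_cle {u v : W} : bruhatLE cs u v ↔ cle cs u v := by
  constructor
  · rintro ⟨lv, lu, h1, h2, h3, h4, h5⟩
    have := cle_of_sublist cs h1 h5
    rwa [h2, h4] at this
  · intro h
    obtain ⟨ω, hred, hω⟩ := cs.exists_reduced_word' v
    obtain ⟨σ, hsub, hredσ, hπ⟩ := subword_of_cle cs h hred hω.symm
    exact ⟨ω, σ, hred, hω.symm, hredσ, hπ, hsub⟩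

private lemma neg_one_pow_sub {p q : ℕ} (h : q ≤ p) :
    (-1:ℤ)^(p - q) = (-1)^p * (-1)^q := by
  have h2 : ((-1:ℤ)^q) * ((-1)^q) = 1 := by
    rw [← pow_add]
    exact Even.neg_one_pow ⟨q, rfl⟩
  calc (-1:ℤ)^(p-q) = (-1)^(p-q) * (((-1:ℤ)^q) * ((-1)^q)) := by rw [h2, mul_one]
    _ = ((-1:ℤ)^(p-q) * (-1)^q) * (-1)^q := by ring
    _ = (-1:ℤ)^((p-q)+q) * (-1)^q := by rw [pow_add]
    _ = (-1:ℤ)^p * (-1)^q := by rw [Nat.sub_add_cancel h]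

end BruhatAux

open BruhatAux in
/-- every Bruhat interval `[u,v]` is Eulerian: the Möbius function of
the interval satisfies `μ(x,y) = (−1)^(l(y)−l(x))` for all `u ≤ x ≤ y ≤ v`.
Here the Möbius function is characterized by `∑_{x ≤ z ≤ y} μ(x,z) = δ_{x,y}`. -/
theorem bruhat_interval_eulerian {B W : Type*} [Group W] {M : CoxeterMatrix B}
    (cs : CoxeterSystem M W) (u v : W) (huv : bruhatLE cs u v)
    (μ : W → W → ℤ)
    (hμ : ∀ x y : W, bruhatLE cs u x → bruhatLE cs x y → bruhatLE cs y v →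
      (∑ᶠ z ∈ {z : W | bruhatLE cs x z ∧ bruhatLE cs z y}, μ x z) =
        if x = y then 1 else 0) :
    ∀ x y : W, bruhatLE cs u x → bruhatLE cs x y → bruhatLE cs y v →
      μ x y = (-1 : ℤ) ^ (cs.length y - cs.length x) := by
  suffices h : ∀ n : ℕ, ∀ x y : W, bruhatLE cs u x → bruhatLE cs x y → bruhatLE cs y v →
      cs.length y ≤ n → μ x y = (-1:ℤ)^(cs.length y - cs.length x) by
    intro x y hux hxy hyv
    exact h (cs.length y) x y hux hxy hyv le_rfl
  intro n
  induction n using Nat.strong_induction_on with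
  | _ n ih =>
  intro x y hux hxy hyv hylen
  have hcxy : cle cs x y := (bruhatLE_iff_cle cs).mp hxy
  have hset : {z : W | bruhatLE cs x z ∧ bruhatLE cs z y} = ↑(intv cs x y) := by
    ext z
    rw [Set.mem_setOf_eq, Finset.mem_coe, mem_intv, bruhatLE_iff_cle cs, bruhatLE_iff_cle cs]
  have hsum := hμ x y hux hxy hyv
  rw [hset, finsum_mem_coe_finset] at hsum
  rcases em (x = y) with heq | hne
  · subst heq
    have hint : intv cs x x = {x} := by
      ext z
      rw [mem_intv, Finset.mem_singleton]
      constructor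
      · rintro ⟨h1, h2⟩
        exact (cle_eq_of_length_ge cs h1 (cle_length cs h2)).symm
      · rintro rfl
        exact ⟨cle_refl cs z, cle_refl cs z⟩
    rw [hint, Finset.sum_singleton, if_pos rfl] at hsum
    rw [hsum, Nat.sub_self, pow_zero]
  · rw [if_neg hne] at hsum
    have hymem : y ∈ intv cs x y := (mem_intv cs).mpr ⟨hcxy, cle_refl cs y⟩
    have hsplit := Finset.add_sum_erase (intv cs x y) (fun z => μ x z) hymem
    have hltxy : cs.length x < cs.length y := by
      have h1 := cle_length cs hcxy
      rcases lt_or_eq_of_le h1 with h | h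
      · exact h
      · exact absurd (cle_eq_of_length_ge cs hcxy (le_of_eq h.symm)) hne
    have hzval : ∀ z ∈ (intv cs x y).erase y,
        μ x z = (-1:ℤ)^(cs.length z - cs.length x) := by
      intro z hz
      have hzy : z ≠ y := Finset.ne_of_mem_erase hz
      have hz2 := (mem_intv cs).mp (Finset.mem_of_mem_erase hz)
      have hlz : cs.length z < cs.length y := by
        have h1 := cle_length cs hz2.2
        rcases lt_or_eq_of_le h1 with h | h
        · exact h
        · exact absurd (cle_eq_of_length_ge cs hz2.2 (le_of_eq h.symm)) hzy
      have hn1 : n - 1 < n := by omega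
      refine ih (n-1) hn1 x z hux ((bruhatLE_iff_cle cs).mpr hz2.1) ?_ (by omega)
      exact (bruhatLE_iff_cle cs).mpr (cle_trans cs hz2.2 ((bruhatLE_iff_cle cs).mp hyv))
    have hkey := sum_neg_one_pow cs rfl x hcxy hne
    have herase : ∑ z ∈ (intv cs x y).erase y, ((-1:ℤ)^(cs.length z)) =
        -((-1:ℤ)^(cs.length y)) := by
      have := Finset.sum_erase_eq_sub (f := fun z => ((-1:ℤ)^(cs.length z))) hymem
      rw [this, hkey]
      ring
    have hsum2 : ∑ z ∈ (intv cs x y).erase y, μ x z =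
        -((-1:ℤ)^(cs.length y - cs.length x)) := by
      have hcongr : ∑ z ∈ (intv cs x y).erase y, μ x z =
          ∑ z ∈ (intv cs x y).erase y, ((-1:ℤ)^(cs.length z)) * ((-1:ℤ)^(cs.length x)) := by
        refine Finset.sum_congr rfl fun z hz => ?_
        have hz2 := (mem_intv cs).mp (Finset.mem_of_mem_erase hz)
        rw [hzval z hz, neg_one_pow_sub (cle_length cs hz2.1)]
      rw [hcongr, ← Finset.sum_mul, herase, neg_one_pow_sub (le_of_lt hltxy)]
      ring
    rw [hsum2] at hsplit
    rw [hsum] at hsplit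
    linarith [hsplit]
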